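/- Consecutive-swap local optimality for PTA Kemeny: if S minimizes the weighted Kendall tau score Δ_PTA(·,P) and tasks a, c are consecutive in S with a immediately before c, then v_a·p_c − v_c·p_a ≥ 0, where v_a (resp. v_c) is the number of voters scheduling a before c (resp. c before a); equivalently v_a ≥ v·p_a/(p_a+p_c), so a must precede c in every PTA Condorcet consistent schedule. -/

import Mathlib

/-- Weighted Kendall tau (PTA Kemeny) score. -/
noncomputable def deltaPTA {n v : ℕ} (p : Fin n → ℝ) (P : Fin v → Equiv.Perm (Fin n))
    (S : Equiv.Perm (Fin n)) : ℝ :=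
  ∑ k, ∑ a, ∑ b, if S a < S b ∧ P k b < P k a then p a else 0

/-- `S` is PTA Condorcet consistent with profile `P`. -/
def PTACondorcet {n v : ℕ} (p : Fin n → ℝ) (P : Fin v → Equiv.Perm (Fin n))
    (S : Equiv.Perm (Fin n)) : Prop :=
  ∀ a b : Fin n, a ≠ b →
    p a / (p a + p b) * v ≤ ((Finset.univ.filter (fun k => P k a < P k b)).card : ℝ) →
    S a < S b

/-- Consecutive-swap local optimality for PTA Kemeny: if `S` minimizes the weighted Kendall
tau score and `a` is immediately before `c` in `S`, then `v_a·p_c − v_c·p_a ≥ 0`, i.e.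
`v_a ≥ v·p_a/(p_a+p_c)`, so `a` precedes `c` in every PTA Condorcet consistent schedule. -/
theorem stmt17 {n v : ℕ} (p : Fin n → ℝ) (hp : ∀ i, 0 < p i)
    (P : Fin v → Equiv.Perm (Fin n)) (S : Equiv.Perm (Fin n))
    (hmin : ∀ S', deltaPTA p P S ≤ deltaPTA p P S')
    (a c : Fin n) (hadj : (S c : ℕ) = (S a : ℕ) + 1) :
    ((Finset.univ.filter (fun k => P k c < P k a)).card : ℝ) * p a ≤
      ((Finset.univ.filter (fun k => P k a < P k c)).card : ℝ) * p c ∧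
    p a / (p a + p c) * v ≤ ((Finset.univ.filter (fun k => P k a < P k c)).card : ℝ) ∧
    (∀ S₀, PTACondorcet p P S₀ → S₀ a < S₀ c) := by
  have hac : a ≠ c := by
    intro h; subst h; omega
  have hSac : S a < S c := by
    rw [Fin.lt_def]; omega
  set S' : Equiv.Perm (Fin n) := S * Equiv.swap a c with hS'def
  have hS'a : S' a = S c := by
    simp [hS'def, Equiv.Perm.mul_apply]
  have hS'c : S' c = S a := by
    simp [hS'def, Equiv.Perm.mul_apply]
  have hS'x : ∀ x, x ≠ a → x ≠ c → S' x = S x := by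
    intro x hx1 hx2
    simp [hS'def, Equiv.Perm.mul_apply, Equiv.swap_apply_of_ne_of_ne hx1 hx2]
  have hne : ∀ z : Fin n, z ≠ a → z ≠ c → (S z : ℕ) ≠ (S a : ℕ) ∧ (S z : ℕ) ≠ (S a : ℕ) + 1 := by
    intro z hz1 hz2
    constructor
    · intro h
      exact hz1 (S.injective (Fin.val_injective h))
    · intro h
      exact hz2 (S.injective (Fin.val_injective (by omega)))
  -- order equivalence off the swapped pair
  have horder : ∀ x y : Fin n, ¬(x = a ∧ y = c) → ¬(x = c ∧ y = a) →
      (S' x < S' y ↔ S x < S y) := by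
    intro x y h1 h2
    by_cases hxa : x = a
    · by_cases hyc : y = c
      · exact absurd ⟨hxa, hyc⟩ h1
      by_cases hya : y = a
      · rw [hxa, hya]; simp
      · rw [hxa, hS'a, hS'x y hya hyc, Fin.lt_def, Fin.lt_def]
        have := hne y hya hyc
        omega
    · by_cases hxc : x = c
      · by_cases hya : y = a
        · exact absurd ⟨hxc, hya⟩ h2
        by_cases hyc : y = c
        · rw [hxc, hyc]; simp
        · rw [hxc, hS'c, hS'x y hya hyc, Fin.lt_def, Fin.lt_def]
          have := hne y hya hyc
          omega
      · rw [hS'x x hxa hxc]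
        by_cases hya : y = a
        · rw [hya, hS'a, Fin.lt_def, Fin.lt_def]
          have := hne x hxa hxc
          omega
        by_cases hyc : y = c
        · rw [hyc, hS'c, Fin.lt_def, Fin.lt_def]
          have := hne x hxa hxc
          omega
        · rw [hS'x y hya hyc]
  -- score difference
  have hdelta : deltaPTA p P S' - deltaPTA p P S =
      ∑ k, ((if P k a < P k c then p c else 0) - (if P k c < P k a then p a else 0)) := by
    unfold deltaPTA
    rw [← Finset.sum_sub_distrib]
    apply Finset.sum_congr rfl
    intro k _
    have key : ∀ x y : Fin n,
        (if S' x < S' y ∧ P k y < P k x then p x else 0)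
        - (if S x < S y ∧ P k y < P k x then p x else 0)
        = (if (x = a ∧ y = c) then -(if P k c < P k a then p a else 0)
           else if (x = c ∧ y = a) then (if P k a < P k c then p c else 0) else 0) := by
      intro x y
      by_cases h1 : x = a ∧ y = c
      · rw [if_pos h1]
        obtain ⟨hx, hy⟩ := h1
        rw [hx, hy, hS'a, hS'c]
        have h2 : ¬ (S c < S a) := Fin.lt_asymm hSac
        simp [hSac, h2]
      · rw [if_neg h1]
        by_cases h2 : x = c ∧ y = a
        · rw [if_pos h2]
          obtain ⟨hx, hy⟩ := h2
          rw [hx, hy, hS'a, hS'c]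
          have h3 : ¬ (S c < S a) := Fin.lt_asymm hSac
          simp [hSac, h3]
        · rw [if_neg h2]
          simp only [horder x y h1 h2]
          simp
    have step1 : (∑ x, ∑ y, if S' x < S' y ∧ P k y < P k x then p x else 0)
        - (∑ x, ∑ y, if S x < S y ∧ P k y < P k x then p x else 0)
        = ∑ x, ∑ y, ((if S' x < S' y ∧ P k y < P k x then p x else 0)
            - (if S x < S y ∧ P k y < P k x then p x else 0)) := by
      rw [← Finset.sum_sub_distrib]
      exact Finset.sum_congr rfl (fun x _ => (Finset.sum_sub_distrib _ _).symm)
    rw [step1]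
    simp_rw [key]
    rw [Finset.sum_comm]
    rw [Finset.sum_eq_add_of_mem c a (Finset.mem_univ c) (Finset.mem_univ a) (Ne.symm hac)
      (by
        intro y _ hy
        apply Finset.sum_eq_zero
        intro x _
        simp [hy.1, hy.2])]
    rw [Finset.sum_eq_single a
      (by intro x _ hx; simp [hx, Ne.symm hac])
      (by simp),
      Finset.sum_eq_single c
      (by intro x _ hx; simp [hx, hac])
      (by simp)]
    simp [hac, Ne.symm hac]
    ring
  have hsum : (0:ℝ) ≤ ∑ k, ((if P k a < P k c then p c else 0) - (if P k c < P k a then p a else 0)) := by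
    have h := hmin S'
    linarith [hdelta]
  have hsum1 : (∑ k, (if P k a < P k c then p c else 0))
      = ((Finset.univ.filter (fun k => P k a < P k c)).card : ℝ) * p c := by
    rw [← Finset.sum_filter, Finset.sum_const, nsmul_eq_mul]
  have hsum2 : (∑ k, (if P k c < P k a then p a else 0))
      = ((Finset.univ.filter (fun k => P k c < P k a)).card : ℝ) * p a := by
    rw [← Finset.sum_filter, Finset.sum_const, nsmul_eq_mul]
  rw [Finset.sum_sub_distrib, hsum1, hsum2] at hsum
  have h1 : ((Finset.univ.filter (fun k => P k c < P k a)).card : ℝ) * p a ≤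
      ((Finset.univ.filter (fun k => P k a < P k c)).card : ℝ) * p c := by linarith
  -- v_a + v_c = v
  have hcards : (Finset.univ.filter (fun k => P k a < P k c)).card
      + (Finset.univ.filter (fun k => P k c < P k a)).card = v := by
    have heq : (Finset.univ.filter (fun k => P k c < P k a))
        = (Finset.univ.filter (fun k => ¬ (P k a < P k c))) := by
      ext k
      simp only [Finset.mem_filter, Finset.mem_univ, true_and]
      constructor
      · intro h; exact Fin.lt_asymm h
      · intro h
        rcases lt_or_gt_of_ne (fun he : P k a = P k c => hac ((P k).injective he)) with h' | h'
        · exact absurd h' h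
        · exact h'
    rw [heq, Finset.card_filter_add_card_filter_not, Finset.card_univ, Fintype.card_fin]
  set va := (Finset.univ.filter (fun k => P k a < P k c)).card with hva
  set vc := (Finset.univ.filter (fun k => P k c < P k a)).card with hvc
  have hpa := hp a
  have hpc := hp c
  have hpsum : (0:ℝ) < p a + p c := by linarith
  have h2 : p a / (p a + p c) * v ≤ (va : ℝ) := by
    rw [div_mul_eq_mul_div, div_le_iff₀ hpsum]
    have hv : (v : ℝ) = (va : ℝ) + (vc : ℝ) := by
      rw [← Nat.cast_add, hcards]
    rw [hv]
    nlinarith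
  refine ⟨h1, h2, ?_⟩
  intro S₀ hS₀
  exact hS₀ a c hac h2
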